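/- Let W be a group of isometries of a Euclidean affine space 𝔞 and P ⊆ 𝔞 a convex subset such that every W-orbit meets P in at most one point. Let s ∈ W be a reflection with fixed hyperplane H = {α = 0}. If the interior P⁰ of P is nonempty, then H does not meet P⁰; consequently P lies entirely in one of the two closed half-spaces determined by H. -/

import Mathlib

open RealInnerProductSpace

/-- Let `W` be a group of isometries of a Euclidean space and `P` a convex
subset such that every `W`-orbit meets `P` in at most one point.  Let `s ∈ W` be a
reflection with fixed hyperplane `H = {x : α(x) = 0}`, where `α(x) = ⟪g, x⟫ + c` is
non-constant.  If the interior of `P` is nonempty, then `H` does not meet the interior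
of `P`, and consequently `P` lies entirely in one of the two closed half-spaces
determined by `H`. -/
theorem reflection_hyperplane_avoids_interior
    {V : Type*} [NormedAddCommGroup V] [InnerProductSpace ℝ V] [FiniteDimensional ℝ V]
    (W : Subgroup (V ≃ᵢ V)) (P : Set V) (hP : Convex ℝ P)
    (horbit : ∀ w ∈ W, ∀ x ∈ P, ∀ y ∈ P, w x = y → x = y)
    (s : V ≃ᵢ V) (hs : s ∈ W) (g : V) (hg : g ≠ 0) (c : ℝ)
    (hrefl : ∀ x : V, s x = x - (⟪g, x⟫ + c) • ((2 / ‖g‖ ^ 2) • g))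
    (hint : (interior P).Nonempty) :
    (∀ x ∈ interior P, ⟪g, x⟫ + c ≠ 0) ∧
      ((∀ x ∈ P, 0 ≤ ⟪g, x⟫ + c) ∨ (∀ x ∈ P, ⟪g, x⟫ + c ≤ 0)) := by
  have hgn : (0:ℝ) < ‖g‖ := norm_pos_iff.mpr hg
  have hgn2 : (‖g‖:ℝ) ^ 2 ≠ 0 := by positivity
  -- Part 1: no zero of α in the interior.
  have part1 : ∀ x ∈ interior P, ⟪g, x⟫ + c ≠ 0 := by
    intro x hx hzero
    obtain ⟨δ, hδ, hball⟩ := Metric.isOpen_iff.mp isOpen_interior x hx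
    set ε : ℝ := δ / (2 * ‖g‖) with hε
    have hεpos : 0 < ε := by positivity
    have hmem : ∀ t : ℝ, |t| = ε → x + t • g ∈ P := by
      intro t ht
      apply interior_subset (hball ?_)
      have hd : dist (x + t • g) x = ε * ‖g‖ := by
        rw [dist_eq_norm]
        simp [norm_smul, ← ht, abs_mul]
      rw [Metric.mem_ball, hd, hε]
      rw [div_mul_eq_mul_div]
      rw [div_lt_iff₀ (by positivity)]
      nlinarith [hδ]
    have h1 : x + ε • g ∈ P := hmem ε (abs_of_pos hεpos)
    have h2 : x + (-ε) • g ∈ P := hmem (-ε) (by rw [abs_neg, abs_of_pos hεpos])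
    have hcomp : s (x + ε • g) = x + (-ε) • g := by
      rw [hrefl]
      have hv : ⟪g, x + ε • g⟫ + c = ε * ‖g‖ ^ 2 := by
        rw [inner_add_right, real_inner_smul_right, real_inner_self_eq_norm_sq]
        linarith [hzero]
      rw [hv, smul_smul]
      have he : ε * ‖g‖ ^ 2 * (2 / ‖g‖ ^ 2) = 2 * ε := by
        field_simp
      rw [he]
      module
    have heq := horbit s hs _ h1 _ h2 hcomp
    have h2e : (2 * ε) • g = 0 := by
      have hm : x + ε • g - (x + (-ε) • g) = (2 * ε) • g := by module
      rw [← hm, sub_eq_zero]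
      exact heq
    exact hg (by simpa [smul_eq_zero, (by positivity : (2:ℝ) * ε ≠ 0)] using h2e)
  refine ⟨part1, ?_⟩
  -- Part 2
  obtain ⟨x₀, hx₀⟩ := hint
  have key : ∀ a ∈ interior P, ∀ b ∈ P, (⟪g, a⟫ + c) * (⟪g, b⟫ + c) < 0 → False := by
    intro a ha b hb hprod
    set fa := ⟪g, a⟫ + c with hfa
    set fb := ⟪g, b⟫ + c with hfb
    have hden : fa - fb ≠ 0 := by
      intro h
      have hh : fa = fb := by linarith
      rw [hh] at hprod
      nlinarith [sq_nonneg fb]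
    have hdensq : (0:ℝ) < (fa - fb) ^ 2 := by positivity
    set t : ℝ := fa / (fa - fb) with htdef
    have ht0 : 0 < t := by
      have h1 : t = fa * (fa - fb) / (fa - fb) ^ 2 := by
        rw [htdef]; field_simp
      rw [h1]
      apply div_pos (by nlinarith) hdensq
    have ht1 : t < 1 := by
      have h1 : 1 - t = fb * (fb - fa) / (fa - fb) ^ 2 := by
        rw [htdef]; field_simp; ring
      nlinarith [div_pos (show (0:ℝ) < fb * (fb - fa) by nlinarith) hdensq]
    have hz : (1 - t) • a + t • b ∈ interior P :=
      hP.combo_interior_closure_mem_interior ha (subset_closure hb)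
        (by linarith) (le_of_lt ht0) (by ring)
    have hzero : ⟪g, (1 - t) • a + t • b⟫ + c = 0 := by
      rw [inner_add_right, real_inner_smul_right, real_inner_smul_right]
      have h2 : (1 - t) * ⟪g, a⟫ + t * ⟪g, b⟫ + c = (1 - t) * fa + t * fb := by
        rw [hfa, hfb]; ring
      rw [h2, htdef]
      field_simp
      ring
    exact part1 _ hz hzero
  rcases lt_or_gt_of_ne (part1 x₀ hx₀) with hneg | hpos
  · right
    intro x hx
    by_contra h
    push_neg at h
    exact key x₀ hx₀ x hx (by nlinarith)
  · left
    intro x hx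
    by_contra h
    push_neg at h
    exact key x₀ hx₀ x hx (by nlinarith)
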